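/- arXiv:1911.02973 — 5 statements merged into one kernel-verified Lean document; each statement's English description precedes it below -/
import Mathlib

section
/- Let φ : [r₀, ∞) → [0, ∞) be a monotone increasing differentiable function with r₀ ≥ 0. Then for every δ > 0, the set of r ∈ (r₀, ∞) where φ'(r) > φ(r)^{1+δ} has finite Lebesgue measure. -/
open MeasureTheory Set

/-- Borel's calculus lemma: for a nonnegative, monotone increasing, differentiable
function `φ` on `[r₀, ∞)` (with `r₀ ≥ 0`) and every `δ > 0`, the set of `r > r₀`
where `φ'(r) > φ(r)^(1+δ)` has finite Lebesgue measure. -/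
theorem borel_calculus_lemma (r₀ : ℝ) (hr₀ : 0 ≤ r₀) (φ : ℝ → ℝ)
    (hnonneg : ∀ r ∈ Ici r₀, 0 ≤ φ r)
    (hmono : MonotoneOn φ (Ici r₀))
    (hdiff : ∀ r ∈ Ici r₀, DifferentiableAt ℝ φ r)
    (δ : ℝ) (hδ : 0 < δ) :
    volume {r : ℝ | r₀ < r ∧ φ r ^ (1 + δ) < deriv φ r} < ⊤ := by
  set E : Set ℝ := {r : ℝ | r₀ < r ∧ φ r ^ (1 + δ) < deriv φ r} with hE
  by_cases hpos : ∃ x ∈ Ici r₀, 0 < φ x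
  · obtain ⟨x, hx, hφx⟩ := hpos
    set b : ℝ := x + 1 with hb
    have hbx : x ≤ b := by simp [hb]
    have hbr₀ : r₀ < b := lt_of_le_of_lt hx (by simp [hb])
    have hbIci : b ∈ Ici r₀ := le_of_lt hbr₀
    have hφb : 0 < φ b := lt_of_lt_of_le hφx (hmono hx hbIci hbx)
    -- φ is positive on [b, ∞)
    have hφpos : ∀ r, b ≤ r → 0 < φ r := fun r hr =>
      lt_of_lt_of_le hφb (hmono hbIci (le_trans hbIci.out hr) hr)
    -- the auxiliary monotone function
    set g : ℝ → ℝ := fun r => -(φ (max r b)) ^ (-δ) with hg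
    have hgmono : Monotone g := by
      intro s t hst
      have h1 : b ≤ max s b := le_max_right _ _
      have h2 : max s b ≤ max t b := max_le_max hst le_rfl
      have := Real.rpow_le_rpow_of_nonpos (hφpos _ h1)
        (hmono (le_trans hbIci.out h1) (le_trans hbIci.out (le_trans h1 h2)) h2)
        (neg_nonpos.mpr hδ.le)
      simpa [hg] using neg_le_neg this
    have hgle : ∀ r, g r ≤ 0 := by
      intro r
      simp only [hg, neg_nonpos]
      exact Real.rpow_nonneg (hnonneg _ (le_trans hbIci.out (le_max_right r b))) _
    -- derivative of g on (b, ∞)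
    have hgderiv : ∀ r, b < r → HasDerivAt g (δ * deriv φ r * φ r ^ (-δ - 1)) r := by
      intro r hr
      have hrIci : r ∈ Ici r₀ := le_of_lt (lt_trans hbr₀ hr)
      have hφr : 0 < φ r := hφpos r hr.le
      have h1 : HasDerivAt (fun s => φ s ^ (-δ)) ((-δ) * φ r ^ (-δ - 1) * deriv φ r) r := by
        have := (Real.hasDerivAt_rpow_const (x := φ r) (p := -δ) (Or.inl hφr.ne')).comp r
          ((hdiff r hrIci).hasDerivAt)
        exact this
      have h2 : HasDerivAt (fun s => -(φ s) ^ (-δ)) (δ * deriv φ r * φ r ^ (-δ - 1)) r := by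
        have := h1.neg
        convert this using 1
        · rfl
        · rfl
        · rfl
        · ring
      apply h2.congr_of_eventuallyEq
      filter_upwards [eventually_gt_nhds hr] with s hs
      simp [hg, max_eq_left hs.le]
    -- the key measurable superset
    set F : Set ℝ := Ioi b ∩ {r | δ ≤ deriv g r} with hF
    have hFmeas : MeasurableSet F :=
      measurableSet_Ioi.inter ((measurable_deriv g) measurableSet_Ici)
    -- E is contained in Ioc r₀ b ∪ F
    have hEsub : E ⊆ Ioc r₀ b ∪ F := by
      rintro r ⟨hr1, hr2⟩
      rcases le_or_gt r b with h | h
      · exact Or.inl ⟨hr1, h⟩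
      · refine Or.inr ⟨h, ?_⟩
        have hd := (hgderiv r h).deriv
        rw [mem_setOf_eq, hd]
        have hφr : 0 < φ r := hφpos r h.le
        have hpow : (0:ℝ) < φ r ^ (-δ - 1) := Real.rpow_pos_of_pos hφr _
        have hkey : φ r ^ (1 + δ) * (φ r ^ (-δ - 1)) = 1 := by
          rw [← Real.rpow_add hφr]
          have h0 : 1 + δ + (-δ - 1) = 0 := by ring
          rw [h0, Real.rpow_zero]
        calc δ = δ * (φ r ^ (1 + δ) * φ r ^ (-δ - 1)) := by rw [hkey]; ring
          _ ≤ δ * (deriv φ r * φ r ^ (-δ - 1)) := by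
              apply mul_le_mul_of_nonneg_left _ hδ.le
              exact mul_le_mul_of_nonneg_right hr2.le hpow.le
          _ = δ * deriv φ r * φ r ^ (-δ - 1) := by ring
    -- bound the measure of F using the Stieltjes measure of g
    set μ := hgmono.stieltjesFunction.measure with hμ
    have hae : ∀ᵐ r, ENNReal.ofReal (deriv g r) ≤ μ.rnDeriv volume r := by
      filter_upwards [hgmono.ae_hasDerivAt] with r hr
      rw [hr.deriv]
      exact ENNReal.ofReal_toReal_le
    have hμIoi : μ (Ioi b) ≤ ENNReal.ofReal (φ b ^ (-δ)) := by
      have hcover : Ioi b = ⋃ n : ℕ, Ioc b (b + n) := by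
        ext y
        simp only [mem_Ioi, mem_iUnion, mem_Ioc]
        constructor
        · intro hy
          obtain ⟨n, hn⟩ := exists_nat_ge (y - b)
          exact ⟨n, hy, by linarith⟩
        · rintro ⟨n, hy, _⟩; exact hy
      have hdir : Directed (· ⊆ ·) (fun n : ℕ => Ioc b (b + n)) := by
        intro m n
        exact ⟨max m n, Ioc_subset_Ioc le_rfl (by simp),
          Ioc_subset_Ioc le_rfl (by simp)⟩
      rw [hcover, hdir.measure_iUnion]
      apply iSup_le
      intro n
      rw [hμ, StieltjesFunction.measure_Ioc]
      apply ENNReal.ofReal_le_ofReal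
      have h1 : hgmono.stieltjesFunction (b + n) ≤ 0 := by
        rw [hgmono.stieltjesFunction_eq]
        exact (hgmono.rightLim_le (lt_add_one _)).trans (hgle _)
      have h2 : -(φ b ^ (-δ)) ≤ hgmono.stieltjesFunction b := by
        rw [hgmono.stieltjesFunction_eq]
        have := hgmono.le_rightLim (le_refl b)
        simpa [hg, max_self] using this
      linarith
    have hFbound : ENNReal.ofReal δ * volume F ≤ ENNReal.ofReal (φ b ^ (-δ)) := by
      calc ENNReal.ofReal δ * volume F = ∫⁻ _ in F, ENNReal.ofReal δ := by
            rw [setLIntegral_const]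
        _ ≤ ∫⁻ r in F, ENNReal.ofReal (deriv g r) := by
            apply setLIntegral_mono (measurable_deriv g).ennreal_ofReal
            intro r hr
            exact ENNReal.ofReal_le_ofReal hr.2
        _ ≤ ∫⁻ r in F, μ.rnDeriv volume r := lintegral_mono_ae (ae_restrict_of_ae hae)
        _ ≤ μ F := Measure.setLIntegral_rnDeriv_le F
        _ ≤ μ (Ioi b) := measure_mono (inter_subset_left)
        _ ≤ ENNReal.ofReal (φ b ^ (-δ)) := hμIoi
    have hFfin : volume F < ⊤ := by
      by_contra h
      push_neg at h
      rw [top_le_iff.mp h, ENNReal.mul_top (ENNReal.ofReal_pos.mpr hδ).ne'] at hFbound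
      exact (lt_irrefl _ (lt_of_le_of_lt hFbound (ENNReal.ofReal_lt_top)))
    calc volume E ≤ volume (Ioc r₀ b ∪ F) := measure_mono hEsub
      _ ≤ volume (Ioc r₀ b) + volume F := measure_union_le _ _
      _ < ⊤ := ENNReal.add_lt_top.mpr ⟨by simp [Real.volume_Ioc], hFfin⟩
  · -- φ vanishes identically on [r₀, ∞), so E is empty
    push_neg at hpos
    have hzero : ∀ r ∈ Ici r₀, φ r = 0 := fun r hr =>
      le_antisymm (hpos r hr) (hnonneg r hr)
    have : E = ∅ := by
      ext r
      simp only [hE, mem_setOf_eq, mem_empty_iff_false, iff_false, not_and]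
      intro hr
      have hev : φ =ᶠ[nhds r] fun _ => 0 := by
        filter_upwards [eventually_gt_nhds hr] with s hs
        exact hzero s hs.le
      rw [hev.deriv_eq, hzero r hr.le, deriv_const]
      rw [Real.zero_rpow (by positivity)]
      exact lt_irrefl 0
    rw [this]
    simp
end

section
/- Let T : [r₀, ∞) → [0, ∞) be a nondecreasing function with r₀ > 1. Suppose there exist constants C > 0 and C' ≥ 0 such that for all r outside a set E ⊂ (r₀, ∞) of finite Lebesgue measure, T(r) ≤ C·(log⁺ T(r) + log r) + C'. Then T(r) = O(log r) as r → ∞, i.e., there exist constants A, B such that T(r) ≤ A·log r + B for all r ≥ r₀. -/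
open MeasureTheory Set

lemma logPlus_le_div_add (x c : ℝ) (hx : 0 ≤ x) (hc : 0 < c) :
    max (Real.log x) 0 ≤ x / c + max (Real.log c) 0 := by
  have hR : 0 ≤ x / c + max (Real.log c) 0 := by
    have := le_max_right (Real.log c) 0
    positivity
  refine max_le ?_ hR
  rcases le_or_gt x 1 with h1 | h1
  · exact le_trans (Real.log_nonpos hx h1) hR
  · have hx0 : 0 < x := by linarith
    have h2 : Real.log x = Real.log (x / c) + Real.log c := by
      rw [← Real.log_mul (by positivity) hc.ne']
      field_simp
    have h3 : Real.log (x / c) ≤ x / c - 1 :=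
      Real.log_le_sub_one_of_pos (by positivity)
    have h4 : Real.log c ≤ max (Real.log c) 0 := le_max_left _ _
    linarith

/-- If a nondecreasing nonnegative function `T` on `[r₀,∞)` (`r₀ > 1`) satisfies
`T(r) ≤ C(log⁺ T(r) + log r) + C'` outside a set of finite Lebesgue measure,
then `T(r) = O(log r)`. -/
theorem growth_logPlus_self (r₀ : ℝ) (hr₀ : 1 < r₀) (T : ℝ → ℝ)
    (hnonneg : ∀ r ∈ Ici r₀, 0 ≤ T r)
    (hmono : MonotoneOn T (Ici r₀))
    (C C' : ℝ) (hC : 0 < C) (hC' : 0 ≤ C')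
    (E : Set ℝ) (hE : E ⊆ Ioi r₀) (hEfin : volume E < ⊤)
    (hineq : ∀ r ∈ Ioi r₀ \ E, T r ≤ C * (max (Real.log (T r)) 0 + Real.log r) + C') :
    ∃ A B : ℝ, ∀ r ∈ Ici r₀, T r ≤ A * Real.log r + B := by
  set m := (volume E).toReal with hm
  have hm0 : 0 ≤ m := ENNReal.toReal_nonneg
  set L := max (Real.log (2 * C)) 0 with hLdef
  have hL : 0 ≤ L := le_max_right _ _
  refine ⟨2 * C, 2 * C * L + 2 * C' + 2 * C * Real.log (m + 2), ?_⟩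
  intro r hr
  have hr' : r₀ ≤ r := hr
  have hr1 : 1 < r := lt_of_lt_of_le hr₀ hr'
  have hrpos : 0 < r := by linarith
  -- find a point r' ∈ (r, r+m+1] outside E
  have hex : ∃ s ∈ Ioc r (r + (m + 1)), s ∉ E := by
    by_contra h
    push_neg at h
    have hsub : Ioc r (r + (m + 1)) ⊆ E := fun x hx => h x hx
    have h1 : volume (Ioc r (r + (m + 1))) ≤ volume E := measure_mono hsub
    rw [Real.volume_Ioc] at h1
    have h2 : volume E = ENNReal.ofReal m := (ENNReal.ofReal_toReal hEfin.ne).symm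
    rw [h2] at h1
    have h3 : r + (m + 1) - r = m + 1 := by ring
    rw [h3] at h1
    have h4 : m + 1 ≤ m := (ENNReal.ofReal_le_ofReal_iff hm0).mp h1
    linarith
  obtain ⟨s, ⟨hrs, hsle⟩, hsE⟩ := hex
  have hs₀ : r₀ < s := lt_of_le_of_lt hr' hrs
  have hspos : 0 < s := by linarith
  have hTle : T r ≤ T s := hmono hr hs₀.le hrs.le
  have hTs : T s ≤ C * (max (Real.log (T s)) 0 + Real.log s) + C' :=
    hineq s ⟨hs₀, hsE⟩
  have hTsnn : 0 ≤ T s := hnonneg s hs₀.le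
  have h2C : (0:ℝ) < 2 * C := by linarith
  have hlogP : max (Real.log (T s)) 0 ≤ T s / (2 * C) + L :=
    logPlus_le_div_add (T s) (2 * C) hTsnn h2C
  -- bound log s
  have hsbound : s ≤ r * (m + 2) := by nlinarith
  have hlogs : Real.log s ≤ Real.log r + Real.log (m + 2) := by
    have := Real.log_le_log hspos hsbound
    rwa [Real.log_mul hrpos.ne' (by linarith)] at this
  have hkey : T s ≤ 2 * C * L + 2 * C * Real.log s + 2 * C' := by
    have h5 : C * (T s / (2 * C)) = T s / 2 := by field_simp
    nlinarith [mul_le_mul_of_nonneg_left hlogP hC.le]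
  have hmul : 2 * C * Real.log s ≤ 2 * C * (Real.log r + Real.log (m + 2)) :=
    mul_le_mul_of_nonneg_left hlogs (by linarith)
  nlinarith
end

section
/- Let T : [r₀, ∞) → [1, ∞) be nondecreasing, and suppose T(r) ≲ log T(r) + log r holds for all r outside a set of finite Lebesgue measure (i.e., there is c > 0 with T(r) ≤ c(log T(r) + log r) on the complement). Then T(r) = O(log r). -/
open MeasureTheory Set

/-- If a nondecreasing function `T ≥ 1` on `[r₀,∞)` (`r₀ > 1`) satisfies
`T(r) ≤ c(log T(r) + log r)` outside a set of finite Lebesgue measure,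
then `T(r) = O(log r)`. -/
theorem growth_log_self (r₀ : ℝ) (hr₀ : 1 < r₀) (T : ℝ → ℝ)
    (hge : ∀ r ∈ Ici r₀, 1 ≤ T r)
    (hmono : MonotoneOn T (Ici r₀))
    (c : ℝ) (hc : 0 < c)
    (E : Set ℝ) (hE : E ⊆ Ioi r₀) (hEfin : volume E < ⊤)
    (hineq : ∀ r ∈ Ioi r₀ \ E, T r ≤ c * (Real.log (T r) + Real.log r)) :
    ∃ A B : ℝ, ∀ r ∈ Ici r₀, T r ≤ A * Real.log r + B := by
  set L : ℝ := (volume E).toReal + 1 with hL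
  have hL0 : 0 < L := by positivity
  refine ⟨2 * c, 2 * c * Real.log (1 + L / r₀) + 2 * c * (Real.log (2 * c) - 1), ?_⟩
  intro r hr
  have hrr : r₀ ≤ r := hr
  have hr0 : (0:ℝ) < r := lt_of_lt_of_le (lt_trans one_pos hr₀) hrr
  -- find s ∈ (r, r+L] \ E
  have hnot : ¬ (Ioc r (r + L) ⊆ E) := by
    intro hsub
    have h1 : volume (Ioc r (r + L)) ≤ volume E := measure_mono hsub
    rw [Real.volume_Ioc, add_sub_cancel_left] at h1
    have h2 : volume E < ENNReal.ofReal L := by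
      rw [hL, ENNReal.ofReal_add (ENNReal.toReal_nonneg) zero_le_one]
      rw [ENNReal.ofReal_toReal hEfin.ne]
      simpa using ENNReal.lt_add_right hEfin.ne (by norm_num)
    exact absurd h1 (not_le.mpr h2)
  obtain ⟨s, hsIoc, hsE⟩ := not_subset.mp hnot
  have hrs : r < s := hsIoc.1
  have hs0 : r₀ < s := lt_of_le_of_lt hr hrs
  have hsIci : s ∈ Ici r₀ := le_of_lt hs0
  have hTs1 : 1 ≤ T s := hge s hsIci
  have hTs0 : 0 < T s := lt_of_lt_of_le one_pos hTs1
  have hTrs : T r ≤ T s := hmono hr hsIci hrs.le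
  have hkey : T s ≤ c * (Real.log (T s) + Real.log s) :=
    hineq s ⟨hs0, hsE⟩
  -- log (T s) ≤ T s / (2c) + log (2c) - 1
  have hlog : Real.log (T s) ≤ T s / (2 * c) + (Real.log (2 * c) - 1) := by
    have h2c : (0:ℝ) < 2 * c := by positivity
    have := Real.log_le_sub_one_of_pos (show (0:ℝ) < T s / (2 * c) by positivity)
    have heq : Real.log (T s) = Real.log (T s / (2 * c)) + Real.log (2 * c) := by
      rw [Real.log_div hTs0.ne' h2c.ne']; ring
    linarith
  have hbound : T s ≤ 2 * c * Real.log s + 2 * c * (Real.log (2 * c) - 1) := by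
    have h1 : c * Real.log (T s) ≤ c * (T s / (2 * c) + (Real.log (2 * c) - 1)) :=
      mul_le_mul_of_nonneg_left hlog hc.le
    have h2 : c * (T s / (2 * c)) = T s / 2 := by field_simp
    nlinarith [hkey]
  -- log s ≤ log r + log (1 + L / r₀)
  have hlogs : Real.log s ≤ Real.log r + Real.log (1 + L / r₀) := by
    have hsle : s ≤ r * (1 + L / r₀) := by
      have : s ≤ r + L := hsIoc.2
      have hr₀0 : (0:ℝ) < r₀ := lt_trans one_pos hr₀
      have : L ≤ r * (L / r₀) := by
        rw [mul_div_assoc']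
        rw [le_div_iff₀ hr₀0]
        nlinarith [hrr, hL0]
      nlinarith [hsIoc.2]
    calc Real.log s ≤ Real.log (r * (1 + L / r₀)) := by
          apply Real.log_le_log (lt_trans (lt_trans one_pos hr₀) hs0) hsle
      _ = Real.log r + Real.log (1 + L / r₀) := by
          rw [Real.log_mul hr0.ne' (by positivity)]
  calc T r ≤ T s := hTrs
    _ ≤ 2 * c * Real.log s + 2 * c * (Real.log (2 * c) - 1) := hbound
    _ ≤ 2 * c * Real.log r + (2 * c * Real.log (1 + L / r₀) + 2 * c * (Real.log (2 * c) - 1)) := by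
        nlinarith [hlogs, hc]
end

section
/- Let γ : {|z| ≥ 1} → ℂ be holomorphic, and suppose the characteristic T(r) := ∫_{r₀}^r (dρ/ρ) ∫_{r₀≤|z|<ρ} (i/2π)|γ'(z)|² dz∧dz̄ satisfies T(r) = O(log r). Then γ extends to a holomorphic map from a neighborhood of ∞ in ℙ¹ to ℂ, i.e., γ(1/w) extends holomorphically across w = 0. -/
open MeasureTheory Set

set_option maxHeartbeats 1600000

open Metric Complex Filter
open scoped ENNReal NNReal Topology

lemma detAux (a : ℂ) :
    (((1 : ℂ →L[ℂ] ℂ).smulRight a).restrictScalars ℝ).det = Complex.normSq a := by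
  have h : ((((1 : ℂ →L[ℂ] ℂ).smulRight a).restrictScalars ℝ) : ℂ →ₗ[ℝ] ℂ)
      = Algebra.lmul ℝ ℂ a := by
    ext z
    simp [mul_comm]
  rw [ContinuousLinearMap.det, h, ← Algebra.norm_apply, Algebra.norm_complex_apply]


lemma circle_avg {G : ℂ → ℂ} {c : ℂ} {s r : ℝ} (hr : 0 < r) (hrs : r ≤ s)
    (hG : DifferentiableOn ℂ G (closedBall c s)) :
    2 * Real.pi * ‖G c‖ ≤ ∫ θ in (0:ℝ)..2 * Real.pi, ‖G (circleMap c r θ)‖ := by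
  have hd : DifferentiableOn ℂ G (closedBall c r) :=
    hG.mono (closedBall_subset_closedBall hrs)
  have hcau := hd.circleIntegral_sub_inv_smul (mem_ball_self hr)
  have h1 : (∮ z in C(c, r), (z - c)⁻¹ • G z)
      = ∫ θ in (0:ℝ)..2 * Real.pi, I • G (circleMap c r θ) := by
    simp only [circleIntegral, deriv_circleMap, circleMap_sub_center, smul_eq_mul]
    refine intervalIntegral.integral_congr fun θ _ => ?_
    have h0 : circleMap 0 r θ ≠ 0 := circleMap_ne_center hr.ne'
    field_simp
  rw [h1, intervalIntegral.integral_smul] at hcau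
  have h2 : ‖(2 * ↑Real.pi * I : ℂ) • G c‖ = 2 * Real.pi * ‖G c‖ := by
    simp [norm_smul, Complex.norm_I, abs_of_pos Real.pi_pos]
  calc 2 * Real.pi * ‖G c‖ = ‖(2 * ↑Real.pi * I : ℂ) • G c‖ := h2.symm
    _ = ‖I • ∫ θ in (0:ℝ)..2 * Real.pi, G (circleMap c r θ)‖ := by rw [hcau]
    _ = ‖∫ θ in (0:ℝ)..2 * Real.pi, G (circleMap c r θ)‖ := by
        simp [norm_smul]
    _ ≤ ∫ θ in (0:ℝ)..2 * Real.pi, ‖G (circleMap c r θ)‖ :=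
        intervalIntegral.norm_integral_le_integral_norm (by positivity)

lemma submean {G : ℂ → ℂ} {c : ℂ} {s : ℝ} (hs : 0 < s)
    (hG : DifferentiableOn ℂ G (closedBall c s)) :
    Real.pi * s ^ 2 * ‖G c‖ ≤ ∫ z in ball c s, ‖G z‖ := by
  set W : ℝ × ℝ → ℝ := fun p => p.1 * ‖G (circleMap c p.1 p.2)‖ with hW
  set Q : Set (ℝ × ℝ) := Ioo (0:ℝ) s ×ˢ Ioo (-Real.pi) Real.pi with hQ
  have measQ : MeasurableSet Q := measurableSet_Ioo.prod measurableSet_Ioo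
  have hGc : ContinuousOn G (closedBall c s) := hG.continuousOn
  have hcm : Continuous (fun p : ℝ × ℝ => circleMap c p.1 p.2) := by
    unfold circleMap
    exact continuous_const.add ((Complex.continuous_ofReal.comp continuous_fst).mul
      (Complex.continuous_exp.comp ((Complex.continuous_ofReal.comp continuous_snd).mul
        continuous_const)))
  -- integrability of W on Q
  have hWcont : ContinuousOn W (Icc (0:ℝ) s ×ˢ Icc (-Real.pi) Real.pi) := by
    refine continuous_fst.continuousOn.mul ((hGc.comp hcm.continuousOn ?_).norm)
    rintro ⟨r, θ⟩ ⟨hr, -⟩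
    exact closedBall_subset_closedBall hr.2 (circleMap_mem_closedBall c hr.1 θ)
  have hWint : IntegrableOn W Q := by
    refine (hWcont.integrableOn_compact (isCompact_Icc.prod isCompact_Icc)).mono_set ?_
    exact prod_mono Ioo_subset_Icc_self Ioo_subset_Icc_self
  -- polar coordinates
  have hsymm : ∀ p : ℝ × ℝ, c + Complex.polarCoord.symm p = circleMap c p.1 p.2 := by
    intro p
    rw [Complex.polarCoord_symm_apply]
    unfold circleMap
    rw [Complex.exp_mul_I, ← Complex.ofReal_cos, ← Complex.ofReal_sin]
  have key := Complex.integral_comp_polarCoord_symm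
    ((ball (0:ℂ) s).indicator fun z => ‖G (c + z)‖)
  -- RHS of key
  have hrhs : (∫ z, (ball (0:ℂ) s).indicator (fun z => ‖G (c + z)‖) z)
      = ∫ z in ball c s, ‖G z‖ := by
    have h1 : ∀ z : ℂ, (ball (0:ℂ) s).indicator (fun z => ‖G (c + z)‖) z
        = (ball c s).indicator (fun u => ‖G u‖) (c + z) := by
      intro z
      by_cases hz : z ∈ ball (0:ℂ) s
      · rw [indicator_of_mem hz, indicator_of_mem]
        simpa [mem_ball, dist_eq_norm] using hz
      · rw [indicator_of_notMem hz, indicator_of_notMem]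
        simpa [mem_ball, dist_eq_norm] using hz
    calc (∫ z, (ball (0:ℂ) s).indicator (fun z => ‖G (c + z)‖) z)
        = ∫ z, (ball c s).indicator (fun u => ‖G u‖) (c + z) := by simp_rw [h1]
      _ = ∫ z, (ball c s).indicator (fun u => ‖G u‖) z :=
          integral_add_left_eq_self _ c
      _ = ∫ z in ball c s, ‖G z‖ := integral_indicator measurableSet_ball
  -- LHS of key
  have hQsub : Q ⊆ Ioi (0:ℝ) ×ˢ Ioo (-Real.pi) Real.pi :=
    prod_mono (fun x hx => hx.1) subset_rfl
  have hlhs : (∫ p in polarCoord.target,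
        p.1 • (ball (0:ℂ) s).indicator (fun z => ‖G (c + z)‖) (Complex.polarCoord.symm p))
      = ∫ p in Q, W p := by
    rw [polarCoord_target]
    have hcongr : ∀ p ∈ Ioi (0:ℝ) ×ˢ Ioo (-Real.pi) Real.pi,
        p.1 • (ball (0:ℂ) s).indicator (fun z => ‖G (c + z)‖) (Complex.polarCoord.symm p)
        = Q.indicator W p := by
      rintro ⟨r, θ⟩ ⟨hr, hθ⟩
      have habs : ‖Complex.polarCoord.symm (r, θ)‖ = r := by
        rw [Complex.norm_polarCoord_symm]
        exact abs_of_pos hr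
      by_cases hrs' : r < s
      · have hmem : Complex.polarCoord.symm (r, θ) ∈ ball (0:ℂ) s := by
          rw [mem_ball, dist_zero_right, habs]; exact hrs'
        rw [indicator_of_mem hmem, indicator_of_mem (show ((r,θ):ℝ×ℝ) ∈ Q from ⟨⟨hr, hrs'⟩, hθ⟩)]
        have := hsymm (r, θ)
        show r • ‖G (c + Complex.polarCoord.symm (r, θ))‖ = r * ‖G (circleMap c r θ)‖
        rw [this, smul_eq_mul]
      · have hmem : Complex.polarCoord.symm (r, θ) ∉ ball (0:ℂ) s := by
          rw [mem_ball, dist_zero_right, habs]; exact fun h => hrs' h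
        have hmemQ : ((r,θ):ℝ×ℝ) ∉ Q := fun h => hrs' h.1.2
        rw [indicator_of_notMem hmem, indicator_of_notMem hmemQ, smul_zero]
    rw [setIntegral_congr_fun (measurableSet_Ioi.prod measurableSet_Ioo) hcongr,
      setIntegral_indicator measQ, inter_eq_self_of_subset_right hQsub]
  -- Fubini
  have hvol : (volume : Measure (ℝ × ℝ)) = (volume : Measure ℝ).prod volume :=
    Measure.volume_eq_prod ℝ ℝ
  have hWintP : IntegrableOn W Q ((volume : Measure ℝ).prod volume) := by
    rw [← hvol]; exact hWint
  have hWint' : Integrable W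
      (((volume : Measure ℝ).restrict (Ioo 0 s)).prod
        ((volume : Measure ℝ).restrict (Ioo (-Real.pi) Real.pi))) := by
    rw [Measure.prod_restrict]; exact hWintP
  have hfub : ∫ p in Q, W p
      = ∫ r in Ioo (0:ℝ) s, ∫ θ in Ioo (-Real.pi) Real.pi, W (r, θ) := by
    rw [hQ, hvol]
    exact setIntegral_prod W hWintP
  have hφint : IntegrableOn (fun r => ∫ θ in Ioo (-Real.pi) Real.pi, W (r, θ)) (Ioo 0 s) :=
    hWint'.integral_prod_left
  -- pointwise lower bound for the inner integral
  have hpt : ∀ r ∈ Ioo (0:ℝ) s,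
      2 * Real.pi * ‖G c‖ * r ≤ ∫ θ in Ioo (-Real.pi) Real.pi, W (r, θ) := by
    intro r hr
    have havg := circle_avg hr.1 hr.2.le hG
    have hper : Function.Periodic (fun θ => ‖G (circleMap c r θ)‖) (2 * Real.pi) :=
      fun θ => congrArg (fun z => ‖G z‖) (periodic_circleMap c r θ)
    have hshift : ∫ θ in (-Real.pi)..Real.pi, ‖G (circleMap c r θ)‖
        = ∫ θ in (0:ℝ)..2 * Real.pi, ‖G (circleMap c r θ)‖ := by
      have h := hper.intervalIntegral_add_eq (-Real.pi) 0
      have e : -Real.pi + 2 * Real.pi = Real.pi := by ring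
      rw [e, zero_add] at h
      exact h
    have hIoo : ∫ θ in Ioo (-Real.pi) Real.pi, ‖G (circleMap c r θ)‖
        = ∫ θ in (-Real.pi)..Real.pi, ‖G (circleMap c r θ)‖ := by
      rw [intervalIntegral.integral_of_le (by linarith [Real.pi_pos]),
        integral_Ioc_eq_integral_Ioo]
    have hmul : ∫ θ in Ioo (-Real.pi) Real.pi, W (r, θ)
        = r * ∫ θ in Ioo (-Real.pi) Real.pi, ‖G (circleMap c r θ)‖ := by
      simp_rw [hW]
      exact integral_const_mul r _
    rw [hmul, hIoo, hshift]
    calc 2 * Real.pi * ‖G c‖ * r = r * (2 * Real.pi * ‖G c‖) := by ring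
      _ ≤ r * ∫ θ in (0:ℝ)..2 * Real.pi, ‖G (circleMap c r θ)‖ :=
          mul_le_mul_of_nonneg_left havg hr.1.le
  -- integrate the lower bound
  have hlin : IntegrableOn (fun r : ℝ => 2 * Real.pi * ‖G c‖ * r) (Ioo 0 s) := by
    refine ((continuous_const.mul continuous_id).continuousOn.integrableOn_compact
      isCompact_Icc).mono_set Ioo_subset_Icc_self
  have hmono : ∫ r in Ioo (0:ℝ) s, 2 * Real.pi * ‖G c‖ * r
      ≤ ∫ r in Ioo (0:ℝ) s, ∫ θ in Ioo (-Real.pi) Real.pi, W (r, θ) :=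
    setIntegral_mono_on hlin hφint measurableSet_Ioo hpt
  have hid : ∫ r in Ioo (0:ℝ) s, (r:ℝ) = s ^ 2 / 2 := by
    rw [← integral_Ioc_eq_integral_Ioo, ← intervalIntegral.integral_of_le hs.le,
      integral_id]
    ring
  have hlhsval : ∫ r in Ioo (0:ℝ) s, 2 * Real.pi * ‖G c‖ * r = Real.pi * s ^ 2 * ‖G c‖ := by
    rw [integral_const_mul, hid]; ring
  calc Real.pi * s ^ 2 * ‖G c‖ = ∫ r in Ioo (0:ℝ) s, 2 * Real.pi * ‖G c‖ * r := hlhsval.symm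
    _ ≤ ∫ r in Ioo (0:ℝ) s, ∫ θ in Ioo (-Real.pi) Real.pi, W (r, θ) := hmono
    _ = ∫ p in Q, W p := hfub.symm
    _ = ∫ z, (ball (0:ℂ) s).indicator (fun z => ‖G (c + z)‖) z := by rw [← hlhs, key]
    _ = ∫ z in ball c s, ‖G z‖ := hrhs


/-- If a holomorphic map `γ : {|z| ≥ 1} → ℂ` has characteristic function
`T(r) = O(log r)`, then `γ(1/w)` extends holomorphically across `w = 0`. -/
theorem extension_of_log_growth (r₀ : ℝ) (hr₀ : 1 < r₀) (γ : ℂ → ℂ)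
    (hγ : DifferentiableOn ℂ γ {z : ℂ | 1 ≤ ‖z‖})
    (T : ℝ → ℝ)
    (hT : T = fun r => ∫ ρ in r₀..r, (1 / ρ) *
      (∫ z in {z : ℂ | r₀ ≤ ‖z‖ ∧ ‖z‖ < ρ}, (1 / Real.pi) * ‖deriv γ z‖ ^ 2))
    (hgrowth : ∃ A B : ℝ, ∀ r ∈ Ici r₀, T r ≤ A * Real.log r + B) :
    ∃ g : ℂ → ℂ, DifferentiableOn ℂ g (Metric.ball (0 : ℂ) 1) ∧
      ∀ w ∈ Metric.ball (0 : ℂ) 1, w ≠ 0 → g w = γ w⁻¹ := by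
  obtain ⟨A, B, hAB⟩ := hgrowth
  have hr₀0 : 0 < r₀ := by linarith
  set Snn : ℝ → Set ℂ := fun ρ => {z : ℂ | r₀ ≤ ‖z‖ ∧ ‖z‖ < ρ} with hSnn
  set Ar : ℝ → ℝ := fun ρ => ∫ z in Snn ρ, ‖deriv γ z‖ ^ 2 with hAr
  have hγ' : DifferentiableOn ℂ γ {z : ℂ | 1 < ‖z‖} := hγ.mono fun z hz => show (1:ℝ) ≤ ‖z‖ from le_of_lt hz
  have hopen1 : IsOpen {z : ℂ | 1 < ‖z‖} := isOpen_lt continuous_const continuous_norm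
  have hcontD : ContinuousOn (fun z => ‖deriv γ z‖ ^ 2) {z : ℂ | 1 < ‖z‖} :=
    ((hγ'.analyticOnNhd hopen1).deriv.continuousOn).norm.pow 2
  have hSmeas : ∀ ρ, MeasurableSet (Snn ρ) := by
    intro ρ
    have : Snn ρ = {z : ℂ | r₀ ≤ ‖z‖} ∩ {z : ℂ | ‖z‖ < ρ} := rfl
    rw [this]
    exact ((isClosed_le continuous_const continuous_norm).measurableSet).inter
      (measurableSet_lt continuous_norm.measurable measurable_const)
  have hK : ∀ ρ : ℝ, IsCompact {z : ℂ | r₀ ≤ ‖z‖ ∧ ‖z‖ ≤ ρ} := by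
    intro ρ
    have : {z : ℂ | r₀ ≤ ‖z‖ ∧ ‖z‖ ≤ ρ} = {z : ℂ | r₀ ≤ ‖z‖} ∩ closedBall 0 ρ := by
      ext z; simp [mem_closedBall, dist_zero_right]
    rw [this]
    exact (isCompact_closedBall 0 ρ).inter_left (isClosed_le continuous_const continuous_norm)
  have hinteg : ∀ ρ, IntegrableOn (fun z => ‖deriv γ z‖ ^ 2) (Snn ρ) := by
    intro ρ
    refine ((hcontD.mono ?_).integrableOn_compact (hK ρ)).mono_set ?_
    · exact fun z hz => lt_of_lt_of_le hr₀ hz.1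
    · exact fun z hz => ⟨hz.1, hz.2.le⟩
  have hAr_nonneg : ∀ ρ, 0 ≤ Ar ρ := fun ρ =>
    setIntegral_nonneg (hSmeas ρ) fun z _ => by positivity
  have hAr_mono : Monotone Ar := by
    intro a b hab
    refine setIntegral_mono_set (hinteg b) (Eventually.of_forall fun z => by positivity) ?_
    exact HasSubset.Subset.eventuallyLE fun z hz => ⟨hz.1, lt_of_lt_of_le hz.2 hab⟩
  set C₀ : ℝ := 2 * A + |B| / Real.log r₀ with hC₀
  -- the key real bound
  have hkey : ∀ ρ, r₀ ≤ ρ → Ar ρ ≤ Real.pi * C₀ := by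
    intro ρ hρ
    have hρ1 : 1 < ρ := lt_of_lt_of_le hr₀ hρ
    have hρ0 : 0 < ρ := by linarith
    have hρsq : ρ ≤ ρ ^ 2 := by nlinarith
    set u : ℝ → ℝ := fun σ => (1 / σ) *
      ∫ z in {z : ℂ | r₀ ≤ ‖z‖ ∧ ‖z‖ < σ}, (1 / Real.pi) * ‖deriv γ z‖ ^ 2 with hu
    have hueq : ∀ σ, u σ = (1 / σ) * ((1 / Real.pi) * Ar σ) := by
      intro σ
      rw [hu]
      simp only
      rw [integral_const_mul]
    have hufun : u = fun σ => (1 / σ) * ((1 / Real.pi) * Ar σ) := funext hueq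
    have hmeasu : Measurable u := by
      rw [hufun]
      exact (measurable_const.div measurable_id).mul
        ((hAr_mono.measurable).const_mul (1 / Real.pi))
    have hunn : ∀ σ : ℝ, 0 < σ → 0 ≤ u σ := by
      intro σ hσ
      rw [hueq]
      have := hAr_nonneg σ
      positivity
    have hbdd : ∀ a b : ℝ, r₀ ≤ a → a ≤ b → IntervalIntegrable u volume a b := by
      intro a b ha hab
      have ha0 : 0 < a := by linarith
      rw [intervalIntegrable_iff, uIoc_of_le hab]
      refine Measure.integrableOn_of_bounded measure_Ioc_lt_top.ne
        hmeasu.aestronglyMeasurable (M := (1 / a) * ((1 / Real.pi) * Ar b)) ?_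
      refine (ae_restrict_iff' measurableSet_Ioc).2 (Eventually.of_forall fun σ hσ => ?_)
      have hσ0 : 0 < σ := lt_of_lt_of_le ha0 hσ.1.le
      rw [Real.norm_eq_abs, _root_.abs_of_nonneg (hunn σ hσ0), hueq]
      have h1 : 1 / σ ≤ 1 / a := one_div_le_one_div_of_le ha0 hσ.1.le
      have h2 : (1 / Real.pi) * Ar σ ≤ (1 / Real.pi) * Ar b :=
        mul_le_mul_of_nonneg_left (hAr_mono hσ.2) (by positivity)
      have h3 : 0 ≤ (1 / Real.pi) * Ar σ := by have := hAr_nonneg σ; positivity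
      exact mul_le_mul h1 h2 h3 (by positivity)
    have hT' : T (ρ ^ 2) = (∫ σ in r₀..ρ, u σ) + ∫ σ in ρ..ρ ^ 2, u σ := by
      rw [hT]
      exact (intervalIntegral.integral_add_adjacent_intervals
        (hbdd r₀ ρ le_rfl hρ) (hbdd ρ (ρ ^ 2) hρ hρsq)).symm
    have hfirst : 0 ≤ ∫ σ in r₀..ρ, u σ :=
      intervalIntegral.integral_nonneg hρ fun σ hσ => hunn σ (by linarith [hσ.1])
    have hlow : (1 / Real.pi) * Ar ρ * Real.log ρ ≤ ∫ σ in ρ..ρ ^ 2, u σ := by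
      have hcont1 : ContinuousOn (fun σ : ℝ => ((1 / Real.pi) * Ar ρ) * (1 / σ))
          (Set.uIcc ρ (ρ ^ 2)) := by
        refine continuousOn_const.mul (continuousOn_const.div continuousOn_id ?_)
        intro x hx
        rw [uIcc_of_le hρsq] at hx
        exact ne_of_gt (lt_of_lt_of_le hρ0 hx.1)
      have hint1 : IntervalIntegrable (fun σ : ℝ => ((1 / Real.pi) * Ar ρ) * (1 / σ))
          volume ρ (ρ ^ 2) := hcont1.intervalIntegrable
      have h1 : ∫ σ in ρ..ρ ^ 2, ((1 / Real.pi) * Ar ρ) * (1 / σ) ≤ ∫ σ in ρ..ρ ^ 2, u σ := by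
        refine intervalIntegral.integral_mono_on hρsq hint1 (hbdd ρ (ρ ^ 2) hρ hρsq) ?_
        intro σ hσ
        have hσ0 : 0 < σ := lt_of_lt_of_le hρ0 hσ.1
        rw [hueq, mul_comm (1 / σ)]
        refine mul_le_mul_of_nonneg_right ?_ (by positivity)
        exact mul_le_mul_of_nonneg_left (hAr_mono hσ.1) (by positivity)
      have h0mem : (0 : ℝ) ∉ Set.uIcc ρ (ρ ^ 2) := by
        rw [uIcc_of_le hρsq]
        exact fun h => absurd h.1 (by linarith)
      have h2 : ∫ σ in ρ..ρ ^ 2, ((1 / Real.pi) * Ar ρ) * (1 / σ)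
          = ((1 / Real.pi) * Ar ρ) * Real.log ρ := by
        rw [intervalIntegral.integral_const_mul, integral_one_div h0mem]
        congr 1
        rw [sq, mul_div_assoc, div_self (ne_of_gt hρ0), mul_one]
      rw [← h2]; exact h1
    have hub : T (ρ ^ 2) ≤ A * (2 * Real.log ρ) + B := by
      have := hAB (ρ ^ 2) (mem_Ici.mpr (le_trans hρ hρsq))
      rwa [show Real.log (ρ ^ 2) = 2 * Real.log ρ by
        rw [Real.log_pow]; push_cast; ring] at this
    have hLpos : 0 < Real.log ρ := Real.log_pos hρ1
    have hL0 : 0 < Real.log r₀ := Real.log_pos hr₀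
    have hLL : Real.log r₀ ≤ Real.log ρ := Real.log_le_log hr₀0 hρ
    have hchain : (1 / Real.pi) * Ar ρ * Real.log ρ ≤ A * (2 * Real.log ρ) + B := by
      calc (1 / Real.pi) * Ar ρ * Real.log ρ ≤ ∫ σ in ρ..ρ ^ 2, u σ := hlow
        _ ≤ T (ρ ^ 2) := by rw [hT']; linarith
        _ ≤ A * (2 * Real.log ρ) + B := hub
    have hBL : B / Real.log ρ ≤ |B| / Real.log r₀ := by
      calc B / Real.log ρ ≤ |B| / Real.log ρ :=
            (div_le_div_iff_of_pos_right hLpos).mpr (le_abs_self B)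
        _ ≤ |B| / Real.log r₀ := div_le_div_of_nonneg_left (abs_nonneg B) hL0 hLL
    have h3 : (1 / Real.pi) * Ar ρ ≤ 2 * A + |B| / Real.log r₀ := by
      have h4 : (1 / Real.pi) * Ar ρ ≤ (A * (2 * Real.log ρ) + B) / Real.log ρ :=
        (le_div_iff₀ hLpos).mpr hchain
      have h5 : (A * (2 * Real.log ρ) + B) / Real.log ρ = 2 * A + B / Real.log ρ := by
        field_simp
      linarith [h4.trans_eq h5]
    have hπ : 0 < Real.pi := Real.pi_pos
    calc Ar ρ = Real.pi * ((1 / Real.pi) * Ar ρ) := by field_simp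
      _ ≤ Real.pi * C₀ := mul_le_mul_of_nonneg_left h3 hπ.le
  -- Part 2 : finiteness of the energy integral near infinity
  have hmeasd : Measurable fun z : ℂ => (‖deriv γ z‖₊ : ℝ≥0∞) ^ 2 :=
    ((measurable_deriv γ).nnnorm.coe_nnreal_ennreal).pow_const 2
  have hE : ∫⁻ z in {z : ℂ | r₀ < ‖z‖}, (‖deriv γ z‖₊ : ℝ≥0∞) ^ 2
      ≤ ENNReal.ofReal (Real.pi * C₀) := by
    set F : ℂ → ℝ≥0∞ := fun z => (‖deriv γ z‖₊ : ℝ≥0∞) ^ 2 with hF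
    set fn : ℕ → ℂ → ℝ≥0∞ := fun n => (Snn (r₀ + n)).indicator F with hfn
    have hmeasfn : ∀ n, Measurable (fn n) := fun n => hmeasd.indicator (hSmeas _)
    have hmono : Monotone fn := by
      intro m n hmn
      refine indicator_le_indicator_of_subset ?_ (fun z => zero_le)
      intro z hz
      have hcast : r₀ + (m : ℝ) ≤ r₀ + n :=
        (add_le_add_iff_left r₀).mpr (by exact_mod_cast hmn)
      exact ⟨hz.1, lt_of_lt_of_le hz.2 hcast⟩
    have hsup : ∀ z, (⨆ n, fn n z) = ({z : ℂ | r₀ ≤ ‖z‖}).indicator F z := by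
      intro z
      by_cases hz : r₀ ≤ ‖z‖
      · rw [indicator_of_mem (show z ∈ {z : ℂ | r₀ ≤ ‖z‖} from hz) F]
        refine le_antisymm (iSup_le fun n => ?_) ?_
        · exact indicator_le_self _ _ z
        · refine le_iSup_of_le ⌈‖z‖⌉₊ ?_
          rw [hfn]
          simp only
          rw [indicator_of_mem]
          exact ⟨hz, lt_of_le_of_lt (Nat.le_ceil ‖z‖) (by linarith [Nat.le_ceil ‖z‖])⟩
      · rw [indicator_of_notMem (show z ∉ {z : ℂ | r₀ ≤ ‖z‖} from hz) F]
        have hzero : ∀ n, fn n z = 0 := fun n =>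
          indicator_of_notMem (fun h => hz h.1) _
        simp [hzero]
    have hcl : MeasurableSet {z : ℂ | r₀ ≤ ‖z‖} :=
      (isClosed_le continuous_const continuous_norm).measurableSet
    calc ∫⁻ z in {z : ℂ | r₀ < ‖z‖}, F z
        ≤ ∫⁻ z in {z : ℂ | r₀ ≤ ‖z‖}, F z :=
          lintegral_mono_set (fun z hz => show r₀ ≤ ‖z‖ from le_of_lt hz)
      _ = ∫⁻ z, ({z : ℂ | r₀ ≤ ‖z‖}).indicator F z := (lintegral_indicator hcl F).symm
      _ = ∫⁻ z, ⨆ n, fn n z := by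
          refine lintegral_congr fun z => ?_
          rw [hsup]
      _ = ⨆ n, ∫⁻ z, fn n z := lintegral_iSup hmeasfn hmono
      _ ≤ ENNReal.ofReal (Real.pi * C₀) := by
          refine iSup_le fun n => ?_
          rw [hfn]
          simp only
          rw [lintegral_indicator (hSmeas _)]
          have heq : ∫⁻ z in Snn (r₀ + n), F z = ENNReal.ofReal (Ar (r₀ + n)) := by
            rw [ofReal_integral_eq_lintegral_ofReal (hinteg _)
              (Eventually.of_forall fun z => by positivity)]
            refine lintegral_congr fun z => ?_
            rw [ENNReal.ofReal_pow (norm_nonneg _), ofReal_norm, enorm_eq_nnnorm]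
          rw [heq]
          exact ENNReal.ofReal_le_ofReal
            (hkey _ (le_add_of_nonneg_right (Nat.cast_nonneg n)))
  -- Part 3 : transfer to the w-plane
  have hr₀inv : 0 < r₀⁻¹ := by positivity
  set P : Set ℂ := ball (0:ℂ) r₀⁻¹ \ {0} with hP
  have hPopen : IsOpen P := isOpen_ball.sdiff isClosed_singleton
  have hPmeas : MeasurableSet P := measurableSet_ball.diff (measurableSet_singleton 0)
  set f : ℂ → ℂ := fun w => γ w⁻¹ with hf
  have hnormP : ∀ {w : ℂ}, w ∈ P → r₀ < ‖w⁻¹‖ := by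
    intro w hw
    have hw0 : w ≠ 0 := hw.2
    have hwp : 0 < ‖w‖ := norm_pos_iff.mpr hw0
    have hwlt : ‖w‖ < r₀⁻¹ := by simpa [mem_ball, dist_zero_right] using hw.1
    rw [norm_inv]
    calc r₀ = (r₀⁻¹)⁻¹ := by rw [inv_inv]
      _ < ‖w‖⁻¹ := by gcongr
  have hfdiffAt : ∀ w ∈ P, DifferentiableAt ℂ f w := by
    intro w hw
    have h1 : DifferentiableAt ℂ γ w⁻¹ :=
      hγ'.differentiableAt (hopen1.mem_nhds (lt_trans hr₀ (hnormP hw)))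
    exact DifferentiableAt.comp w h1 (differentiableAt_inv hw.2)
  have hfdOn : DifferentiableOn ℂ f P := fun w hw => (hfdiffAt w hw).differentiableWithinAt
  have hdfOn : DifferentiableOn ℂ (deriv f) P :=
    ((hfdOn.analyticOnNhd hPopen).deriv).differentiableOn
  have hderiv : ∀ w ∈ P, deriv f w = deriv γ w⁻¹ * (-(w ^ 2)⁻¹) := by
    intro w hw
    have h1 : DifferentiableAt ℂ γ w⁻¹ :=
      hγ'.differentiableAt (hopen1.mem_nhds (lt_trans hr₀ (hnormP hw)))
    have : f = γ ∘ (fun w : ℂ => w⁻¹) := rfl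
    rw [this, deriv_comp w h1 (differentiableAt_inv hw.2), deriv_inv]
  have hinj : InjOn (fun z : ℂ => z⁻¹) P := inv_injective.injOn
  set f' : ℂ → ℂ →L[ℝ] ℂ :=
    fun w => ((1 : ℂ →L[ℂ] ℂ).smulRight (-(w ^ 2)⁻¹)).restrictScalars ℝ with hf'def
  have hf' : ∀ w ∈ P, HasFDerivWithinAt (fun z : ℂ => z⁻¹) (f' w) P w := fun w hw =>
    (((hasDerivAt_iff_hasFDerivAt.mp (hasDerivAt_inv hw.2)).restrictScalars ℝ)).hasFDerivWithinAt
  have himg : (fun z : ℂ => z⁻¹) '' P = {z : ℂ | r₀ < ‖z‖} := by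
    ext z
    constructor
    · rintro ⟨w, hw, rfl⟩
      exact hnormP hw
    · intro hz
      have hz0 : z ≠ 0 := by
        intro h
        rw [show z ∈ {z : ℂ | r₀ < ‖z‖} ↔ r₀ < ‖z‖ from Iff.rfl, h, norm_zero] at hz
        exact absurd hz (by linarith)
      refine ⟨z⁻¹, ⟨?_, inv_ne_zero hz0⟩, inv_inv z⟩
      rw [mem_ball, dist_zero_right, norm_inv]
      gcongr
      exact hz
  have hCoV := lintegral_image_eq_lintegral_abs_det_fderiv_mul volume hPmeas hf' hinj
    (fun z => (‖deriv γ z‖₊ : ℝ≥0∞) ^ 2)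
  rw [himg] at hCoV
  have hptw : ∀ w ∈ P, ENNReal.ofReal |(f' w).det| * (‖deriv γ w⁻¹‖₊ : ℝ≥0∞) ^ 2
      = (‖deriv f w‖₊ : ℝ≥0∞) ^ 2 := by
    intro w hw
    have hdet : (f' w).det = Complex.normSq (-(w ^ 2)⁻¹) := detAux _
    rw [hdet, _root_.abs_of_nonneg (Complex.normSq_nonneg _)]
    have h1 : ENNReal.ofReal (Complex.normSq (-(w ^ 2)⁻¹))
        = (‖(-(w ^ 2)⁻¹ : ℂ)‖₊ : ℝ≥0∞) ^ 2 := by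
      rw [Complex.normSq_eq_norm_sq,
        ENNReal.ofReal_pow (norm_nonneg _), ofReal_norm, enorm_eq_nnnorm]
    rw [h1, hderiv w hw, nnnorm_mul, ENNReal.coe_mul, mul_pow]
    ring
  have hEf : ∫⁻ w in P, (‖deriv f w‖₊ : ℝ≥0∞) ^ 2 ≤ ENNReal.ofReal (Real.pi * C₀) := by
    calc ∫⁻ w in P, (‖deriv f w‖₊ : ℝ≥0∞) ^ 2
        = ∫⁻ w in P, ENNReal.ofReal |(f' w).det| * (‖deriv γ w⁻¹‖₊ : ℝ≥0∞) ^ 2 :=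
          setLIntegral_congr_fun hPmeas
            (fun w hw => (hptw w hw).symm)
      _ = ∫⁻ z in {z : ℂ | r₀ < ‖z‖}, (‖deriv γ z‖₊ : ℝ≥0∞) ^ 2 := hCoV.symm
      _ ≤ ENNReal.ofReal (Real.pi * C₀) := hE
  have hEfTop : ∫⁻ w in P, (‖deriv f w‖₊ : ℝ≥0∞) ^ 2 < ⊤ :=
    lt_of_le_of_lt hEf ENNReal.ofReal_lt_top
  -- Part 4 : smallness of the energy tail
  have hmeasF : Measurable fun w : ℂ => (‖deriv f w‖₊ : ℝ≥0∞) ^ 2 :=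
    ((measurable_deriv f).nnnorm.coe_nnreal_ennreal).pow_const 2
  set dν : ℂ → ℝ≥0∞ := P.indicator (fun w => (‖deriv f w‖₊ : ℝ≥0∞) ^ 2) with hdν
  have hdνmeas : Measurable dν := hmeasF.indicator hPmeas
  set μ' : Measure ℂ := volume.withDensity dν with hμ'
  have hμ'eq : ∀ t : Set ℂ, MeasurableSet t →
      μ' t = ∫⁻ w in t ∩ P, (‖deriv f w‖₊ : ℝ≥0∞) ^ 2 := by
    intro t ht
    rw [hμ', withDensity_apply _ ht, ← lintegral_indicator ht, hdν,
      Set.indicator_indicator, lintegral_indicator (ht.inter hPmeas)]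
  have htail : ∀ ε : ℝ≥0∞, 0 < ε → ∃ δ : ℝ, 0 < δ ∧
      ∫⁻ w in P ∩ closedBall (0:ℂ) δ, (‖deriv f w‖₊ : ℝ≥0∞) ^ 2 < ε := by
    intro ε hε
    have hnull : ∀ n : ℕ, NullMeasurableSet (closedBall (0:ℂ) (1/(n+1))) μ' :=
      fun n => measurableSet_closedBall.nullMeasurableSet
    have hanti : Antitone fun n : ℕ => closedBall (0:ℂ) (1/(n+1)) := by
      intro m n hmn
      apply closedBall_subset_closedBall
      have : (m:ℝ) + 1 ≤ (n:ℝ) + 1 := by exact_mod_cast Nat.succ_le_succ hmn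
      exact one_div_le_one_div_of_le (by positivity) this
    have hfin : ∃ n : ℕ, μ' (closedBall (0:ℂ) (1/(n+1))) ≠ ⊤ := by
      refine ⟨0, ?_⟩
      rw [hμ'eq _ measurableSet_closedBall]
      exact (lt_of_le_of_lt (lintegral_mono_set inter_subset_right) hEfTop).ne
    have hInt : (⋂ n : ℕ, closedBall (0:ℂ) (1/(n+1))) = {0} := by
      apply Subset.antisymm
      · intro z hz
        simp only [mem_iInter, mem_closedBall, dist_zero_right] at hz
        have h0 : ‖z‖ ≤ 0 := by
          refine ge_of_tendsto' tendsto_one_div_add_atTop_nhds_zero_nat fun n => ?_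
          exact_mod_cast hz n
        simp [norm_le_zero_iff.mp h0]
      · intro z hz
        rw [mem_singleton_iff] at hz
        subst hz
        simp only [mem_iInter, mem_closedBall, dist_self]
        intro n
        positivity
    have h0 : μ' {0} = 0 := by
      rw [hμ'eq _ (measurableSet_singleton 0)]
      have : ({0} : Set ℂ) ∩ P = ∅ := by
        apply eq_empty_of_forall_notMem
        rintro z ⟨h1, h2⟩
        rw [mem_singleton_iff] at h1
        exact h2.2 (by simp [h1])
      rw [this]
      simp
    have htendsto := tendsto_measure_iInter_atTop hnull hanti hfin
    rw [hInt, h0] at htendsto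
    obtain ⟨n, hn⟩ := (htendsto.eventually (gt_mem_nhds hε)).exists
    refine ⟨1/(n+1), by positivity, ?_⟩
    have heq := hμ'eq (closedBall (0:ℂ) (1/(n+1))) measurableSet_closedBall
    rw [inter_comm] at heq
    rw [← heq]
    exact hn
  -- Part 5 : the little-o estimate for deriv f at 0
  have ho : (fun w => deriv f w - deriv f 0) =o[𝓝[≠] (0:ℂ)] fun w => (w - 0)⁻¹ := by
    simp only [sub_zero]
    have h1 : (fun w => deriv f w) =o[𝓝[≠] (0:ℂ)] fun w => w⁻¹ := by
      rw [Asymptotics.isLittleO_iff]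
      intro ε hε
      obtain ⟨δ, hδ0, hδ⟩ := htail (ENNReal.ofReal (Real.pi * ε^2/4))
        (ENNReal.ofReal_pos.mpr (by positivity))
      set m := min ((2/3) * r₀⁻¹) ((2/3) * δ) with hm
      have hm0 : 0 < m := lt_min (by positivity) (by positivity)
      have hev : ∀ᶠ w in 𝓝[≠] (0:ℂ), ‖w‖ < m ∧ w ≠ 0 := by
        have h2 : ∀ᶠ w in 𝓝 (0:ℂ), ‖w‖ < m := by
          filter_upwards [Metric.ball_mem_nhds (0:ℂ) hm0] with w hw
          simpa [mem_ball, dist_zero_right] using hw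
        exact (h2.filter_mono nhdsWithin_le_nhds).and self_mem_nhdsWithin
      filter_upwards [hev] with w hw
      obtain ⟨hwm, hw0⟩ := hw
      have hwpos : 0 < ‖w‖ := norm_pos_iff.mpr hw0
      set t := ‖w‖/2 with ht
      have htpos : 0 < t := by positivity
      have hsub : closedBall w t ⊆ P ∩ closedBall (0:ℂ) δ := by
        intro u hu
        have hu1 : ‖u - w‖ ≤ t := by simpa [mem_closedBall, dist_eq_norm] using hu
        have hul : ‖w‖/2 ≤ ‖u‖ := by
          have h3 := norm_sub_norm_le w u
          rw [norm_sub_rev u w] at hu1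
          linarith
        have huu : ‖u‖ ≤ 3/2 * ‖w‖ := by
          have h4 : ‖u‖ ≤ ‖w‖ + ‖u - w‖ := by
            calc ‖u‖ = ‖w + (u - w)‖ := by ring_nf
              _ ≤ ‖w‖ + ‖u - w‖ := norm_add_le _ _
          linarith
        have hmle1 : m ≤ (2/3) * r₀⁻¹ := min_le_left _ _
        have hmle2 : m ≤ (2/3) * δ := min_le_right _ _
        refine ⟨⟨?_, ?_⟩, ?_⟩
        · rw [mem_ball, dist_zero_right]
          nlinarith
        · simp only [mem_singleton_iff]
          intro h
          rw [h, norm_zero] at hul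
          linarith
        · rw [mem_closedBall, dist_zero_right]
          nlinarith
      have hPsub : closedBall w t ⊆ P := hsub.trans inter_subset_left
      have hGd : DifferentiableOn ℂ (fun z => deriv f z * deriv f z) (closedBall w t) :=
        (hdfOn.mono hPsub).mul (hdfOn.mono hPsub)
      have hsm := submean htpos hGd
      have hGcont : ContinuousOn (fun z => ‖deriv f z * deriv f z‖) (closedBall w t) :=
        (hGd.continuousOn).norm
      have hGint : IntegrableOn (fun z => ‖deriv f z * deriv f z‖) (ball w t) :=
        (hGcont.integrableOn_compact (isCompact_closedBall w t)).mono_set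
          ball_subset_closedBall
      have hlin : ENNReal.ofReal (∫ z in ball w t, ‖deriv f z * deriv f z‖)
          = ∫⁻ z in ball w t, (‖deriv f z‖₊ : ℝ≥0∞) ^ 2 := by
        rw [ofReal_integral_eq_lintegral_ofReal hGint
          (Eventually.of_forall fun z => norm_nonneg _)]
        refine lintegral_congr fun z => ?_
        rw [norm_mul, ENNReal.ofReal_mul (norm_nonneg _), ofReal_norm, enorm_eq_nnnorm, sq]
      have hchain : ENNReal.ofReal (Real.pi * t^2 * ‖deriv f w * deriv f w‖)
          < ENNReal.ofReal (Real.pi * ε^2/4) := by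
        calc ENNReal.ofReal (Real.pi * t^2 * ‖deriv f w * deriv f w‖)
            ≤ ENNReal.ofReal (∫ z in ball w t, ‖deriv f z * deriv f z‖) :=
              ENNReal.ofReal_le_ofReal hsm
          _ = ∫⁻ z in ball w t, (‖deriv f z‖₊ : ℝ≥0∞) ^ 2 := hlin
          _ ≤ ∫⁻ z in P ∩ closedBall (0:ℂ) δ, (‖deriv f z‖₊ : ℝ≥0∞) ^ 2 :=
              lintegral_mono_set (ball_subset_closedBall.trans hsub)
          _ < ENNReal.ofReal (Real.pi * ε^2/4) := hδ
      have hreal : Real.pi * t^2 * ‖deriv f w * deriv f w‖ < Real.pi * ε^2/4 :=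
        (ENNReal.ofReal_lt_ofReal_iff (by positivity)).mp hchain
      rw [norm_mul] at hreal
      have hd2 : (‖w‖ * ‖deriv f w‖)^2 < ε^2 := by
        rw [ht] at hreal
        nlinarith [Real.pi_pos, norm_nonneg (deriv f w)]
      have hfinal : ‖w‖ * ‖deriv f w‖ < ε :=
        lt_of_pow_lt_pow_left₀ 2 hε.le hd2
      rw [norm_inv]
      have h5 : ‖deriv f w‖ < ε / ‖w‖ := by
        rw [lt_div_iff₀ hwpos]
        linarith [hfinal, mul_comm ‖w‖ ‖deriv f w‖]
      calc ‖deriv f w‖ ≤ ε / ‖w‖ := h5.le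
        _ = ε * ‖w‖⁻¹ := div_eq_mul_inv ε ‖w‖
    have h2 : (fun _ : ℂ => deriv f 0) =o[𝓝[≠] (0:ℂ)] fun w => w⁻¹ := by
      refine Asymptotics.isLittleO_const_left.mpr (Or.inr ?_)
      have h3 : Tendsto (fun w : ℂ => ‖w‖) (𝓝[≠] 0) (𝓝[>] 0) := by
        rw [tendsto_nhdsWithin_iff]
        constructor
        · exact (continuous_norm.tendsto' 0 0 norm_zero).mono_left nhdsWithin_le_nhds
        · exact eventually_mem_nhdsWithin.mono fun w hw =>
            mem_Ioi.mpr (norm_pos_iff.mpr hw)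
      have h4 : Tendsto (fun w : ℂ => ‖w‖⁻¹) (𝓝[≠] 0) atTop :=
        tendsto_inv_nhdsGT_zero.comp h3
      refine h4.congr fun w => ?_
      simp [norm_inv]
    exact h1.sub h2
  -- Part 6 : removable singularity for deriv f ; bound on deriv f near 0
  have hdP : DifferentiableOn ℂ (deriv f) (ball (0:ℂ) r₀⁻¹ \ {0}) := hdfOn
  have hupd := Complex.differentiableOn_update_limUnder_of_isLittleO
    (ball_mem_nhds (0:ℂ) hr₀inv) hdP ho
  set h₁ : ℂ → ℂ := Function.update (deriv f) 0 (limUnder (𝓝[≠] 0) (deriv f)) with hh₁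
  have hcont : ContinuousAt h₁ 0 :=
    (hupd.differentiableAt (ball_mem_nhds _ hr₀inv)).continuousAt
  set M : ℝ := ‖h₁ 0‖ + 1 with hM
  have hM0 : 0 ≤ M := by positivity
  have hMev : ∀ᶠ w in 𝓝 (0:ℂ), ‖h₁ w‖ < M :=
    Filter.Tendsto.eventually_lt_const (lt_add_one ‖h₁ 0‖) hcont.norm
  obtain ⟨ρ₂', hρ₂'pos, hρ₂'⟩ := Metric.eventually_nhds_iff.mp hMev
  set ρ₂ : ℝ := min ρ₂' r₀⁻¹ with hρ₂
  have hρ₂pos : 0 < ρ₂ := lt_min hρ₂'pos hr₀inv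
  have hρ₂le : ρ₂ ≤ r₀⁻¹ := min_le_right _ _
  have hMd : ∀ w : ℂ, w ≠ 0 → ‖w‖ < ρ₂ → ‖deriv f w‖ ≤ M := by
    intro w hw0 hw
    have h6 := hρ₂' (show dist w 0 < ρ₂' by
      rw [dist_zero_right]; exact lt_of_lt_of_le hw (min_le_left _ _))
    rw [hh₁, Function.update_of_ne hw0] at h6
    exact h6.le

  -- Part 7 : boundedness of f near 0
  set τ : ℝ := ρ₂ / 2 with hτ
  have hτpos : 0 < τ := by positivity
  have hτltρ₂ : τ < ρ₂ := half_lt_self hρ₂pos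
  have hτlt : τ < r₀⁻¹ := lt_of_lt_of_le hτltρ₂ hρ₂le
  have hfP : ∀ x : ℂ, x ≠ 0 → ‖x‖ ≤ τ → x ∈ P := by
    intro x hx0 hxτ
    exact ⟨by rw [mem_ball, dist_zero_right]; linarith, by simpa using hx0⟩
  obtain ⟨C₁, hC₁⟩ := (isCompact_sphere (0:ℂ) τ).exists_bound_of_continuousOn
    (f := f) (fun x hx => by
      have hxn : ‖x‖ = τ := by simpa [mem_sphere, dist_zero_right] using hx
      have hx0 : x ≠ 0 := by
        intro h; rw [h, norm_zero] at hxn; exact absurd hxn.symm (ne_of_gt hτpos)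
      exact (hfdiffAt x (hfP x hx0 hxn.le)).continuousAt.continuousWithinAt)
  have hfbound : ∀ w : ℂ, w ≠ 0 → ‖w‖ < τ → ‖f w‖ ≤ C₁ + M * (2 * τ) := by
    intro w hw0 hwτ
    have hwpos : 0 < ‖w‖ := norm_pos_iff.mpr hw0
    set t : ℝ := τ * ‖w‖⁻¹ with htdef
    have ht0 : 0 < t := by positivity
    have ht1 : 1 ≤ t := by
      rw [htdef, ← div_eq_mul_inv]
      exact (one_le_div hwpos).mpr hwτ.le
    set p : ℂ := (t : ℝ) • w with hpdef
    have htw : t * ‖w‖ = τ := by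
      rw [htdef, mul_assoc, inv_mul_cancel₀ (ne_of_gt hwpos), mul_one]
    have hpnorm : ‖p‖ = τ := by
      rw [hpdef, norm_smul, Real.norm_eq_abs, _root_.abs_of_pos ht0, htw]
    have hseg : ∀ z ∈ segment ℝ w p, z ≠ 0 ∧ ‖z‖ ≤ τ := by
      rintro z ⟨a, b, ha, hb, hab, rfl⟩
      have hz : a • w + b • p = ((a + b * t) : ℝ) • w := by
        rw [hpdef, smul_smul, ← add_smul]
      rw [hz]
      have hco : 1 ≤ a + b * t := by nlinarith
      constructor
      · exact smul_ne_zero (by linarith) hw0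
      · rw [norm_smul, Real.norm_eq_abs, _root_.abs_of_pos (by linarith)]
        have h7 : a * ‖w‖ ≤ a * τ := by nlinarith
        have h8 : b * (t * ‖w‖) = b * τ := by rw [htw]
        nlinarith
    set F' : ℂ → ℂ →L[ℝ] ℂ :=
      fun x => ((1 : ℂ →L[ℂ] ℂ).smulRight (deriv f x)).restrictScalars ℝ with hF'
    have hder : ∀ x ∈ segment ℝ w p, HasFDerivWithinAt f (F' x) (segment ℝ w p) x := by
      intro x hx
      obtain ⟨hx0, hxτ⟩ := hseg x hx
      exact ((hasDerivAt_iff_hasFDerivAt.mp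
        (hfdiffAt x (hfP x hx0 hxτ)).hasDerivAt).restrictScalars ℝ).hasFDerivWithinAt
    have hbnd : ∀ x ∈ segment ℝ w p, ‖F' x‖ ≤ M := by
      intro x hx
      obtain ⟨hx0, hxτ⟩ := hseg x hx
      rw [hF']
      simp only
      rw [ContinuousLinearMap.norm_restrictScalars,
        ContinuousLinearMap.norm_smulRight_apply]
      simpa using hMd x hx0 (lt_of_le_of_lt hxτ hτltρ₂)
    have hest := (convex_segment w p).norm_image_sub_le_of_norm_hasFDerivWithin_le
      hder hbnd (right_mem_segment ℝ w p) (left_mem_segment ℝ w p)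
    have hp_sph : p ∈ sphere (0:ℂ) τ := by
      rw [mem_sphere, dist_zero_right]; exact hpnorm
    have hwp : ‖w - p‖ ≤ 2 * τ := by
      calc ‖w - p‖ ≤ ‖w‖ + ‖p‖ := norm_sub_le _ _
        _ ≤ 2 * τ := by rw [hpnorm]; linarith
    calc ‖f w‖ = ‖f p + (f w - f p)‖ := by ring_nf
      _ ≤ ‖f p‖ + ‖f w - f p‖ := norm_add_le _ _
      _ ≤ C₁ + M * ‖w - p‖ := add_le_add (hC₁ p hp_sph) hest
      _ ≤ C₁ + M * (2 * τ) := by nlinarith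
  -- Part 8 : removable singularity for f
  have hbdd : BddAbove (norm ∘ f '' (ball (0:ℂ) τ \ {0})) := by
    refine ⟨C₁ + M * (2 * τ), ?_⟩
    rintro x ⟨w, ⟨hw1, hw2⟩, rfl⟩
    exact hfbound w (by simpa using hw2)
      (by simpa [mem_ball, dist_zero_right] using hw1)
  have hfτ : DifferentiableOn ℂ f (ball (0:ℂ) τ \ {0}) :=
    hfdOn.mono (diff_subset_diff (ball_subset_ball hτlt.le) subset_rfl)
  have hFdiff := Complex.differentiableOn_update_limUnder_of_bddAbove
    (ball_mem_nhds (0:ℂ) hτpos) hfτ hbdd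
  set F : ℂ → ℂ := Function.update f 0 (limUnder (𝓝[≠] 0) f) with hFdef
  -- Part 9 : assemble
  refine ⟨F, ?_, fun w hw hw0 => Function.update_of_ne hw0 _ _⟩
  intro w hw
  by_cases hw0 : w = 0
  · subst hw0
    exact (hFdiff.differentiableAt (ball_mem_nhds _ hτpos)).differentiableWithinAt
  · have h1lt : 1 < ‖w⁻¹‖ := by
      have hwlt : ‖w‖ < 1 := by simpa [mem_ball, dist_zero_right] using hw
      have hwp : 0 < ‖w‖ := norm_pos_iff.mpr hw0
      rw [norm_inv]
      exact (one_lt_inv₀ hwp).mpr hwlt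
    have hww : DifferentiableAt ℂ f w :=
      DifferentiableAt.comp w (hγ'.differentiableAt (hopen1.mem_nhds h1lt))
        (differentiableAt_inv hw0)
    have hEq : F =ᶠ[𝓝 w] f := by
      filter_upwards [isOpen_compl_singleton.mem_nhds
        (show w ∈ ({0}ᶜ : Set ℂ) from hw0)] with u hu
      exact Function.update_of_ne hu _ _
    exact (hww.congr_of_eventuallyEq hEq).differentiableWithinAt
end

section
/- Let ξ : {|z| ≥ r₀} → [0, ∞) be continuous and T(r) := ∫_{r₀}^r (dρ/ρ) ∫_{r₀≤|z|<ρ} ξ (i/2π)dz∧dz̄. Then the modified proximity function m(r) := (1/2π)∫₀^{2π} log ξ(re^{iθ}) dθ (where ξ > 0 on |z| = r) satisfies m(r) ≤ log( (d/ds)² T(r) ) − 2 log r, where d/ds = r·d/dr. -/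
open MeasureTheory Set

lemma annulus_integral_polar (r₀ : ℝ) (h0 : 0 < r₀) (t : ℝ) (ht : r₀ ≤ t)
    (Ξ : ℂ → ℝ) (hc : Continuous Ξ) :
    (∫ z in {z : ℂ | r₀ ≤ ‖z‖ ∧ ‖z‖ < t}, Ξ z)
      = ∫ s in r₀..t, s * ∫ θ in (-Real.pi)..Real.pi,
          Ξ ((s : ℂ) * Complex.exp (θ * Complex.I)) := by
  set K : Set ℂ := {z : ℂ | r₀ ≤ ‖z‖ ∧ ‖z‖ < t} with hK
  have hKm : MeasurableSet K := by
    apply MeasurableSet.inter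
    · exact measurableSet_le measurable_const measurable_norm
    · exact measurableSet_lt measurable_norm measurable_const
  have htar : polarCoord.target = Ioi (0:ℝ) ×ˢ Ioo (-Real.pi) Real.pi := rfl
  have h1 : (∫ z in K, Ξ z) = ∫ z, K.indicator Ξ z := (integral_indicator hKm).symm
  rw [h1, ← Complex.integral_comp_polarCoord_symm (K.indicator Ξ)]
  have h2 : ∀ p ∈ polarCoord.target,
      p.1 • (K.indicator Ξ) (Complex.polarCoord.symm p)
        = ((Ico r₀ t) ×ˢ (univ : Set ℝ)).indicator
            (fun p : ℝ × ℝ => p.1 * Ξ (Complex.polarCoord.symm p)) p := by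
    rintro ⟨s, θ⟩ hp
    rw [htar] at hp
    have hs : 0 < s := hp.1
    have hnorm : ‖Complex.polarCoord.symm (s, θ)‖ = s := by
      rw [Complex.norm_polarCoord_symm, abs_of_pos hs]
    have hiff : Complex.polarCoord.symm (s, θ) ∈ K ↔ s ∈ Ico r₀ t := by
      rw [hK]; simp only [mem_setOf_eq, mem_Ico, hnorm]
    by_cases hmem : s ∈ Ico r₀ t
    · rw [indicator_of_mem (hiff.mpr hmem), indicator_of_mem (mk_mem_prod hmem (mem_univ θ))]
      simp [smul_eq_mul]
    · rw [indicator_of_notMem (fun h => hmem (hiff.mp h)),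
        indicator_of_notMem (fun h => hmem (mem_prod.mp h).1)]
      simp
  rw [setIntegral_congr_fun (polarCoord.open_target.measurableSet) h2,
    integral_indicator (measurableSet_Ico.prod MeasurableSet.univ),
    Measure.restrict_restrict (measurableSet_Ico.prod MeasurableSet.univ)]
  have htarget : (Ico r₀ t ×ˢ (univ : Set ℝ)) ∩ polarCoord.target
      = (Ico r₀ t) ×ˢ (Ioo (-Real.pi) Real.pi) := by
    rw [htar, prod_inter_prod, univ_inter, inter_eq_left.mpr]
    intro x hx
    exact lt_of_lt_of_le h0 hx.1
  rw [htarget]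
  have hsymm : (fun p : ℝ × ℝ => (Complex.polarCoord.symm p : ℂ))
      = fun p : ℝ × ℝ => ((p.1 : ℂ) * (Real.cos p.2 + Real.sin p.2 * Complex.I)) :=
    funext fun p => Complex.polarCoord_symm_apply p
  have hF : Continuous (fun p : ℝ × ℝ => p.1 * Ξ (Complex.polarCoord.symm p)) := by
    apply continuous_fst.mul
    apply hc.comp
    show Continuous (fun p : ℝ × ℝ => (Complex.polarCoord.symm p : ℂ))
    rw [hsymm]
    fun_prop
  have hint : IntegrableOn (fun p : ℝ × ℝ => p.1 * Ξ (Complex.polarCoord.symm p))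
      ((Ico r₀ t) ×ˢ (Ioo (-Real.pi) Real.pi)) := by
    apply IntegrableOn.mono_set (t := (Icc r₀ t) ×ˢ (Icc (-Real.pi) Real.pi))
    · exact hF.continuousOn.integrableOn_compact (isCompact_Icc.prod isCompact_Icc)
    · exact prod_mono Ico_subset_Icc_self Ioo_subset_Icc_self
  rw [Measure.volume_eq_prod, setIntegral_prod _ (by rwa [← Measure.volume_eq_prod])]
  rw [intervalIntegral.integral_of_le ht, integral_Ioc_eq_integral_Ioo,
    integral_Ico_eq_integral_Ioo]
  apply setIntegral_congr_fun measurableSet_Ioo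
  intro s hs
  simp only []
  rw [intervalIntegral.integral_of_le (by linarith [Real.pi_pos] : -Real.pi ≤ Real.pi),
    integral_Ioc_eq_integral_Ioo, ← MeasureTheory.integral_const_mul]
  apply setIntegral_congr_fun measurableSet_Ioo
  intro θ hθ
  show s * Ξ (Complex.polarCoord.symm (s, θ)) = s * Ξ ((s : ℂ) * Complex.exp (θ * Complex.I))
  congr 1
  rw [Complex.polarCoord_symm_apply, Complex.exp_mul_I]
  push_cast
  ring_nf


lemma circleMap_integral_continuous (Ξ : ℂ → ℝ) (hc : Continuous Ξ) :
    Continuous (fun s : ℝ => ∫ θ in (-Real.pi)..Real.pi,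
      Ξ ((s : ℂ) * Complex.exp (θ * Complex.I))) := by
  have : Continuous (Function.uncurry fun (s θ : ℝ) =>
      Ξ ((s : ℂ) * Complex.exp (θ * Complex.I))) := by
    fun_prop
  exact intervalIntegral.continuous_parametric_intervalIntegral_of_continuous (f := fun (s θ : ℝ) =>
    Ξ ((s : ℂ) * Complex.exp (θ * Complex.I))) this continuous_const

/-- Lemma on the modified proximity function: with `T(r)` the characteristic of the
density `ξ` and `m(r) = (1/2π)∫₀^{2π} log ξ(re^{iθ}) dθ`, concavity of `log` gives
`m(r) ≤ log((d/ds)² T(r)) − 2 log r`, where `d/ds = r·d/dr` is the logarithmic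
derivative (so `(d/ds)² T(r) = r·(d/dr)(r·(d/dr)T)(r)`). -/
theorem proximity_le_log_second_derivative (r₀ : ℝ) (hr₀ : 1 < r₀)
    (ξ : ℂ → ℝ) (hcont : ContinuousOn ξ {z : ℂ | r₀ ≤ ‖z‖})
    (hnonneg : ∀ z : ℂ, r₀ ≤ ‖z‖ → 0 ≤ ξ z)
    (r : ℝ) (hr : r₀ < r)
    (hpos : ∀ z : ℂ, ‖z‖ = r → 0 < ξ z) :
    let T : ℝ → ℝ := fun t => ∫ ρ in r₀..t, (1 / ρ) *
      ((1 / (2 * Real.pi)) * ∫ z in {z : ℂ | r₀ ≤ ‖z‖ ∧ ‖z‖ < ρ}, ξ z)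
    (1 / (2 * Real.pi)) * (∫ θ in (0 : ℝ)..(2 * Real.pi),
        Real.log (ξ ((r : ℂ) * Complex.exp (θ * Complex.I)))) ≤
      Real.log (r * deriv (fun t => t * deriv T t) r) - 2 * Real.log r := by
  intro T
  have hπ : 0 < Real.pi := Real.pi_pos
  have h2π : (0:ℝ) < 2 * Real.pi := by linarith
  have h0r₀ : (0:ℝ) < r₀ := by linarith
  have h0r : (0:ℝ) < r := by linarith
  -- Tietze extension of ξ to a globally continuous function
  obtain ⟨Ξc, hΞc⟩ : ∃ g : C(ℂ, ℝ), g.restrict {z : ℂ | r₀ ≤ ‖z‖}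
      = ⟨_, hcont.restrict⟩ :=
    ContinuousMap.exists_restrict_eq (isClosed_le continuous_const continuous_norm) _
  set Ξ : ℂ → ℝ := ⇑Ξc with hΞdef
  have hΞ : Continuous Ξ := Ξc.continuous
  have hΞeq : ∀ z : ℂ, r₀ ≤ ‖z‖ → Ξ z = ξ z := fun z hz =>
    ContinuousMap.congr_fun hΞc ⟨z, hz⟩
  -- the circle average
  set S : ℝ → ℝ := fun s => ∫ θ in (-Real.pi)..Real.pi,
      Ξ ((s : ℂ) * Complex.exp (θ * Complex.I)) with hSdef
  have hS : Continuous S := circleMap_integral_continuous Ξ hΞ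
  have hh : Continuous (fun s : ℝ => s * S s) := continuous_id.mul hS
  set prim : ℝ → ℝ := fun t => ∫ s in r₀..t, s * S s with hprimdef
  have hprim : Continuous prim :=
    intervalIntegral.continuous_primitive (fun a b => hh.intervalIntegrable a b) r₀
  set G : ℝ → ℝ := fun ρ => (1 / ρ) * ((1 / (2 * Real.pi)) * prim ρ) with hGdef
  have hG : ContinuousOn G (Ioi 0) := by
    apply ContinuousOn.mul
    · exact continuousOn_const.div continuousOn_id (fun x hx => ne_of_gt hx)
    · exact (continuous_const.mul hprim).continuousOn
  -- the annulus integral in polar coordinates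
  have hA : ∀ ρ, r₀ ≤ ρ →
      (∫ z in {z : ℂ | r₀ ≤ ‖z‖ ∧ ‖z‖ < ρ}, ξ z) = prim ρ := by
    intro ρ hρ
    have hmble : MeasurableSet {z : ℂ | r₀ ≤ ‖z‖ ∧ ‖z‖ < ρ} := by
      apply MeasurableSet.inter
      · exact measurableSet_le measurable_const measurable_norm
      · exact measurableSet_lt measurable_norm measurable_const
    show _ = ∫ s in r₀..ρ, s * S s
    rw [setIntegral_congr_fun hmble (fun z hz => (hΞeq z hz.1).symm)]
    exact annulus_integral_polar r₀ h0r₀ ρ hρ Ξ hΞ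
  -- T coincides with the primitive of G on `Ici r₀`
  have hTeq : ∀ t, r₀ ≤ t → T t = ∫ ρ in r₀..t, G ρ := by
    intro t ht
    apply intervalIntegral.integral_congr
    intro ρ hρ
    rw [uIcc_of_le ht] at hρ
    show (1 / ρ) * ((1 / (2 * Real.pi)) * ∫ z in {z : ℂ | r₀ ≤ ‖z‖ ∧ ‖z‖ < ρ}, ξ z) = G ρ
    rw [hA ρ hρ.1]
  -- derivative of T on a neighborhood of r
  have hTd : ∀ t, r₀ < t → deriv T t = G t := by
    intro t ht
    have h1 : T =ᶠ[nhds t] (fun u => ∫ ρ in r₀..u, G ρ) := by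
      filter_upwards [isOpen_Ioi.mem_nhds ht] with u hu
      exact hTeq u (le_of_lt hu)
    rw [h1.deriv_eq]
    have ht0 : (0:ℝ) < t := lt_trans h0r₀ ht
    have hGi : IntervalIntegrable G volume r₀ t := by
      apply ContinuousOn.intervalIntegrable
      apply hG.mono
      rw [uIcc_of_le (le_of_lt ht)]
      intro x hx
      exact lt_of_lt_of_le h0r₀ hx.1
    have hmeas : StronglyMeasurableAtFilter G (nhds t) volume :=
      ⟨Ioi 0, isOpen_Ioi.mem_nhds ht0, hG.aestronglyMeasurable measurableSet_Ioi⟩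
    exact (intervalIntegral.integral_hasDerivAt_right hGi hmeas
      (hG.continuousAt (isOpen_Ioi.mem_nhds ht0))).deriv
  -- the function t * T'(t) near r
  have hEq2 : (fun t => t * deriv T t) =ᶠ[nhds r]
      (fun t => (1 / (2 * Real.pi)) * prim t) := by
    filter_upwards [isOpen_Ioi.mem_nhds hr] with t ht
    rw [hTd t ht, hGdef]
    have ht0 : t ≠ 0 := ne_of_gt (lt_trans h0r₀ ht)
    field_simp
  -- compute the second logarithmic derivative
  have hd2 : deriv (fun t => t * deriv T t) r = (1 / (2 * Real.pi)) * (r * S r) := by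
    rw [hEq2.deriv_eq]
    have hmeas : StronglyMeasurableAtFilter (fun s : ℝ => s * S s) (nhds r) volume :=
      hh.stronglyMeasurable.stronglyMeasurableAtFilter
    have := ((intervalIntegral.integral_hasDerivAt_right
      (hh.intervalIntegrable r₀ r) hmeas hh.continuousAt).const_mul
      (1 / (2 * Real.pi))).deriv
    simpa using this
  rw [hd2]
  -- the circle values
  set f : ℝ → ℝ := fun θ => Ξ ((r : ℂ) * Complex.exp (θ * Complex.I)) with hfdef
  have hfc : Continuous f := by fun_prop
  have hnorm : ∀ θ : ℝ, ‖(r : ℂ) * Complex.exp (θ * Complex.I)‖ = r := by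
    intro θ
    rw [norm_mul, Complex.norm_exp_ofReal_mul_I, mul_one, Complex.norm_real,
      Real.norm_eq_abs, abs_of_pos h0r]
  have hfpos : ∀ θ : ℝ, 0 < f θ := by
    intro θ
    rw [hfdef]
    simp only []
    rw [hΞeq _ (by rw [hnorm]; exact le_of_lt hr)]
    exact hpos _ (hnorm θ)
  -- periodicity : S r = ∫ θ in 0..2π, f θ
  have hper : Function.Periodic f (2 * Real.pi) := by
    intro θ
    rw [hfdef]
    simp only []
    congr 2
    push_cast
    rw [add_mul, Complex.exp_add, Complex.exp_two_pi_mul_I, mul_one]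
  have hSr : S r = ∫ θ in (0:ℝ)..(2 * Real.pi), f θ := by
    have := hper.intervalIntegral_add_eq (-Real.pi) 0
    rw [hSdef]
    simp only []
    have h1 : -Real.pi + 2 * Real.pi = Real.pi := by ring
    have h2 : (0:ℝ) + 2 * Real.pi = 2 * Real.pi := by ring
    rw [h1, h2] at this
    exact this
  -- positivity and lower bound for f
  obtain ⟨θ₀, hθ₀mem, hθ₀⟩ := isCompact_Icc.exists_isMinOn
    (nonempty_Icc.mpr (by linarith : (0:ℝ) ≤ 2 * Real.pi)) hfc.continuousOn
  set ε : ℝ := f θ₀ with hεdef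
  have hε : 0 < ε := hfpos θ₀
  have hflow : ∀ θ ∈ Icc (0:ℝ) (2 * Real.pi), ε ≤ f θ := fun θ hθ => hθ₀ hθ
  -- the integral is positive
  have hIpos : 0 < ∫ θ in (0:ℝ)..(2 * Real.pi), f θ := by
    have h1 : ∫ θ in (0:ℝ)..(2 * Real.pi), ε ≤ ∫ θ in (0:ℝ)..(2 * Real.pi), f θ := by
      apply intervalIntegral.integral_mono_on (by linarith)
        intervalIntegrable_const (hfc.intervalIntegrable _ _)
      exact hflow
    have h2 : ∫ θ in (0:ℝ)..(2 * Real.pi), ε = 2 * Real.pi * ε := by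
      simp [mul_comm]
    nlinarith
  -- Jensen's inequality
  have hjensen : (1 / (2 * Real.pi)) * (∫ θ in (0:ℝ)..(2 * Real.pi), Real.log (f θ))
      ≤ Real.log ((1 / (2 * Real.pi)) * ∫ θ in (0:ℝ)..(2 * Real.pi), f θ) := by
    have hconc : ConcaveOn ℝ (Ici ε) Real.log :=
      (strictConcaveOn_log_Ioi.concaveOn).subset (fun x hx => lt_of_lt_of_le hε hx)
        (convex_Ici ε)
    have hlogc : ContinuousOn Real.log (Ici ε) :=
      Real.continuousOn_log.mono (fun x hx => ne_of_gt (lt_of_lt_of_le hε hx))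
    have hmem : ∀ᵐ θ ∂(volume.restrict (Ioc (0:ℝ) (2 * Real.pi))), f θ ∈ Ici ε := by
      rw [ae_restrict_iff' measurableSet_Ioc]
      filter_upwards with θ hθ
      exact hflow θ (Ioc_subset_Icc_self hθ)
    have hfi : IntegrableOn f (Ioc (0:ℝ) (2 * Real.pi)) := by
      exact hfc.integrableOn_Ioc
    have hgi : IntegrableOn (Real.log ∘ f) (Ioc (0:ℝ) (2 * Real.pi)) := by
      apply IntegrableOn.mono_set (t := Icc (0:ℝ) (2 * Real.pi)) _ Ioc_subset_Icc_self
      apply ContinuousOn.integrableOn_compact isCompact_Icc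
      exact ContinuousOn.comp hlogc hfc.continuousOn (fun θ hθ => hflow θ hθ)
    have key := hconc.le_map_set_average hlogc isClosed_Ici
      (by simp [Real.volume_Ioc]; positivity)
      (by simp [Real.volume_Ioc]; exact ENNReal.mul_ne_top (by simp) ENNReal.ofReal_ne_top) hmem hfi hgi
    have havg : ∀ g : ℝ → ℝ, (⨍ θ in Ioc (0:ℝ) (2 * Real.pi), g θ)
        = (1 / (2 * Real.pi)) * ∫ θ in (0:ℝ)..(2 * Real.pi), g θ := by
      intro g
      rw [setAverage_eq, Real.volume_real_Ioc_of_le (le_of_lt h2π), intervalIntegral.integral_of_le (le_of_lt h2π),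
        smul_eq_mul]
      have h20 : 2 * Real.pi - 0 = 2 * Real.pi := by ring
      rw [h20, one_div]
    rw [havg, havg] at key
    exact key
  -- identify the left side with the integral of log f
  have hLHS : (∫ θ in (0:ℝ)..(2 * Real.pi),
      Real.log (ξ ((r : ℂ) * Complex.exp (θ * Complex.I))))
      = ∫ θ in (0:ℝ)..(2 * Real.pi), Real.log (f θ) := by
    apply intervalIntegral.integral_congr
    intro θ hθ
    rw [hfdef]
    simp only []
    rw [hΞeq _ (by rw [hnorm]; exact le_of_lt hr)]
  rw [hLHS]
  -- final computation with logarithms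
  have hrhs : Real.log (r * ((1 / (2 * Real.pi)) * (r * S r)))
      = 2 * Real.log r
        + Real.log ((1 / (2 * Real.pi)) * ∫ θ in (0:ℝ)..(2 * Real.pi), f θ) := by
    rw [hSr]
    set I : ℝ := ∫ θ in (0:ℝ)..(2 * Real.pi), f θ with hIdef
    have h1 : r * ((1 / (2 * Real.pi)) * (r * I)) = r ^ 2 * ((1 / (2 * Real.pi)) * I) := by
      ring
    rw [h1, Real.log_mul (by positivity) (by positivity), Real.log_pow]
    norm_num
  rw [hrhs]
  linarith [hjensen]
end
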